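/- Let S_n^p be the tree formed by attaching n pairwise disjoint copies of D_{n-1}^p (a path on p vertices with n−1 extra leaves at one end) at a common central vertex (identifying the free end of each copy with the center). Then def(S_{n-1}^p) = n² − 3n + 1 for n ≥ 4 and odd p ≥ 1. -/

import Mathlib

open SimpleGraph

/-- The deficiency of a graph: number of vertices left unsaturated by a maximum matching. -/
noncomputable def deficiency {V : Type*} (G : SimpleGraph V) : ℕ :=
  Nat.card V - sSup {n | ∃ M : G.Subgraph, M.IsMatching ∧ M.verts.ncard = n}

/-- `S_n^p`: `n` pairwise disjoint copies of `D_{n-1}^p` (a path on `p` vertices with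
`n-1` extra leaves at one end) with their free ends identified at a common center.
The center is path position `0` of every copy; `Sum.inr (i, Sum.inl j)` is path
position `j+1` of copy `i`, and the `n-1` leaves of copy `i` are attached at path
position `p-1`. -/
def snpGraph (n p : ℕ) : SimpleGraph (Unit ⊕ Fin n × (Fin (p - 1) ⊕ Fin (n - 1))) :=
  SimpleGraph.fromRel (fun a b =>
    match a, b with
    | Sum.inl _, Sum.inr (_, Sum.inl j) => (j : ℕ) = 0
    | Sum.inl _, Sum.inr (_, Sum.inr _) => p = 1
    | Sum.inr (i, Sum.inl j), Sum.inr (i', Sum.inl j') => i = i' ∧ (j : ℕ) + 1 = (j' : ℕ)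
    | Sum.inr (i, Sum.inl j), Sum.inr (i', Sum.inr _) => i = i' ∧ (j : ℕ) + 2 = p
    | _, _ => False)

namespace SnpAux

variable {N p : ℕ}

lemma adj_CP {i : Fin N} {j : Fin (p-1)} :
    (snpGraph N p).Adj (Sum.inl ()) (Sum.inr (i, Sum.inl j)) ↔ (j : ℕ) = 0 := by
  simp [snpGraph, fromRel_adj]

lemma adj_CL {i : Fin N} {k : Fin (N-1)} :
    (snpGraph N p).Adj (Sum.inl ()) (Sum.inr (i, Sum.inr k)) ↔ p = 1 := by
  simp [snpGraph, fromRel_adj]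

lemma adj_PP {i i' : Fin N} {j j' : Fin (p-1)} :
    (snpGraph N p).Adj (Sum.inr (i, Sum.inl j)) (Sum.inr (i', Sum.inl j')) ↔
      i = i' ∧ ((j:ℕ) + 1 = j' ∨ (j':ℕ) + 1 = j) := by
  constructor
  · intro h
    rw [snpGraph, fromRel_adj] at h
    obtain ⟨hne, h | h⟩ := h
    · exact ⟨h.1, Or.inl h.2⟩
    · exact ⟨h.1.symm, Or.inr h.2⟩
  · rintro ⟨rfl, h | h⟩
    · rw [snpGraph, fromRel_adj]
      refine ⟨?_, Or.inl ⟨rfl, h⟩⟩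
      simp only [ne_eq, Sum.inr.injEq, Prod.mk.injEq, Sum.inl.injEq]
      rintro ⟨-, rfl⟩; omega
    · rw [snpGraph, fromRel_adj]
      refine ⟨?_, Or.inr ⟨rfl, h⟩⟩
      simp only [ne_eq, Sum.inr.injEq, Prod.mk.injEq, Sum.inl.injEq]
      rintro ⟨-, rfl⟩; omega

lemma adj_PL {i i' : Fin N} {j : Fin (p-1)} {k : Fin (N-1)} :
    (snpGraph N p).Adj (Sum.inr (i, Sum.inl j)) (Sum.inr (i', Sum.inr k)) ↔
      i = i' ∧ (j:ℕ) + 2 = p := by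
  rw [snpGraph, fromRel_adj]; simp

lemma adj_LL {i i' : Fin N} {k k' : Fin (N-1)} :
    ¬ (snpGraph N p).Adj (Sum.inr (i, Sum.inr k)) (Sum.inr (i', Sum.inr k')) := by
  rw [snpGraph, fromRel_adj]; simp

abbrev VV (N p : ℕ) := Unit ⊕ Fin N × (Fin (p - 1) ⊕ Fin (N - 1))

def F (N p : ℕ) (hN : 0 < N) (hl : 0 < N - 1) (hp2 : 1 < p) : VV N p → VV N p := fun v =>
  match v with
  | Sum.inl _ => Sum.inr (⟨0, hN⟩, Sum.inl ⟨0, by omega⟩)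
  | Sum.inr (i, Sum.inl j) =>
      if (i : ℕ) = 0 then
        if (j : ℕ) = 0 then Sum.inl ()
        else if (j : ℕ) = p - 2 then Sum.inr (i, Sum.inr ⟨0, hl⟩)
        else if h3 : Odd (j : ℕ) ∧ (j : ℕ) + 1 < p - 1 then
          Sum.inr (i, Sum.inl ⟨(j : ℕ) + 1, h3.2⟩)
        else Sum.inr (i, Sum.inl ⟨(j : ℕ) - 1, by have := j.isLt; omega⟩)
      else
        if h4 : Even (j : ℕ) ∧ (j : ℕ) + 1 < p - 1 then
          Sum.inr (i, Sum.inl ⟨(j : ℕ) + 1, h4.2⟩)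
        else Sum.inr (i, Sum.inl ⟨(j : ℕ) - 1, by have := j.isLt; omega⟩)
  | Sum.inr (i, Sum.inr k) =>
      if (i : ℕ) = 0 ∧ (k : ℕ) = 0 then Sum.inr (i, Sum.inl ⟨p - 2, by omega⟩)
      else v

def mverts (N p : ℕ) : Set (VV N p) :=
  {v | match v with
       | Sum.inl _ => True
       | Sum.inr (_, Sum.inl _) => True
       | Sum.inr (i, Sum.inr k) => (i : ℕ) = 0 ∧ (k : ℕ) = 0}



lemma F_spec (hN : 0 < N) (hl : 0 < N - 1) (hp2 : 1 < p) (hop : Odd p)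
    (v : VV N p) (hv : v ∈ mverts N p) :
    F N p hN hl hp2 (F N p hN hl hp2 v) = v ∧ F N p hN hl hp2 v ∈ mverts N p ∧
      (snpGraph N p).Adj v (F N p hN hl hp2 v) := by
  have hpm : p % 2 = 1 := Nat.odd_iff.mp hop
  have hp3 : 3 ≤ p := by omega
  obtain ⟨u⟩ | ⟨i, j | k⟩ := v
  · -- center
    have hF : F N p hN hl hp2 (Sum.inl u) = Sum.inr (⟨0, hN⟩, Sum.inl ⟨0, by omega⟩) := rfl
    refine ⟨?_, by rw [hF]; trivial, by rw [hF]; exact adj_CP.mpr rfl⟩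
    rw [hF]
    simp only [F]
    simp
  · -- path vertex
    have hjlt := j.isLt
    by_cases hi : (i : ℕ) = 0
    · by_cases hj0 : (j : ℕ) = 0
      · have hF : F N p hN hl hp2 (Sum.inr (i, Sum.inl j)) = Sum.inl () := by
          simp only [F]
          rw [if_pos hi, if_pos hj0]
        refine ⟨?_, by rw [hF]; trivial, by rw [hF]; exact (adj_CP.mpr hj0).symm⟩
        rw [hF]
        simp only [F]
        simp only [Sum.inr.injEq, Prod.mk.injEq, Sum.inl.injEq]
        exact ⟨Fin.val_injective (show (0:ℕ) = ↑i by omega),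
               Fin.val_injective (show (0:ℕ) = ↑j by omega)⟩
      · by_cases hjm : (j : ℕ) = p - 2
        · have hF : F N p hN hl hp2 (Sum.inr (i, Sum.inl j)) = Sum.inr (i, Sum.inr ⟨0, hl⟩) := by
            simp only [F]
            rw [if_pos hi, if_neg hj0, if_pos hjm]
          refine ⟨?_, by rw [hF]; exact ⟨hi, rfl⟩, by rw [hF]; exact adj_PL.mpr ⟨rfl, by omega⟩⟩
          rw [hF]
          simp only [F]
          rw [if_pos (show (i:ℕ) = 0 ∧ True from ⟨hi, trivial⟩)]
          simp only [Sum.inr.injEq, Prod.mk.injEq, Sum.inl.injEq, true_and]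
          exact Fin.val_injective (show p - 2 = (j:ℕ) by omega)
        · by_cases hjo : Odd (j : ℕ)
          · have hj2 : (j:ℕ) % 2 = 1 := Nat.odd_iff.mp hjo
            have hlt : (j : ℕ) + 1 < p - 1 := by omega
            have hF : F N p hN hl hp2 (Sum.inr (i, Sum.inl j)) =
                Sum.inr (i, Sum.inl ⟨(j:ℕ)+1, hlt⟩) := by
              simp only [F]
              rw [if_pos hi, if_neg hj0, if_neg hjm, dif_pos ⟨hjo, hlt⟩]
            refine ⟨?_, by rw [hF]; trivial,
              by rw [hF]; exact adj_PP.mpr ⟨rfl, Or.inl rfl⟩⟩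
            rw [hF]
            simp only [F]
            rw [if_pos hi, if_neg (show ¬((j:ℕ) + 1 = 0) by omega),
              if_neg (show ¬((j:ℕ) + 1 = p - 2) by omega),
              dif_neg (show ¬(Odd ((j:ℕ)+1) ∧ (j:ℕ)+1+1 < p - 1) by
                rintro ⟨h, -⟩; rw [Nat.odd_iff] at h; omega)]
            simp only [Sum.inr.injEq, Prod.mk.injEq, Sum.inl.injEq, true_and]
            exact Fin.val_injective (show (j:ℕ) + 1 - 1 = (j:ℕ) by omega)
          · have hj2 : (j:ℕ) % 2 = 0 := Nat.even_iff.mp (Nat.not_odd_iff_even.mp hjo)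
            have hlt : (j : ℕ) - 1 < p - 1 := by omega
            have hF : F N p hN hl hp2 (Sum.inr (i, Sum.inl j)) =
                Sum.inr (i, Sum.inl ⟨(j:ℕ)-1, hlt⟩) := by
              simp only [F]
              rw [if_pos hi, if_neg hj0, if_neg hjm,
                dif_neg (by rintro ⟨h, -⟩; exact hjo h)]
            refine ⟨?_, by rw [hF]; trivial,
              by rw [hF]; exact adj_PP.mpr ⟨rfl, Or.inr (show (j:ℕ) - 1 + 1 = (j:ℕ) by omega)⟩⟩
            rw [hF]
            simp only [F]
            rw [if_pos hi, if_neg (show ¬((j:ℕ) - 1 = 0) by omega),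
              if_neg (show ¬((j:ℕ) - 1 = p - 2) by omega),
              dif_pos (show Odd ((j:ℕ)-1) ∧ (j:ℕ)-1+1 < p - 1 from
                ⟨by rw [Nat.odd_iff]; omega, by omega⟩)]
            simp only [Sum.inr.injEq, Prod.mk.injEq, Sum.inl.injEq, true_and]
            exact Fin.val_injective (show (j:ℕ) - 1 + 1 = (j:ℕ) by omega)
    · -- i ≠ 0
      have hq2 : (p - 1) % 2 = 0 := by omega
      by_cases he : Even (j : ℕ)
      · have hj2 : (j:ℕ) % 2 = 0 := Nat.even_iff.mp he
        have hlt : (j : ℕ) + 1 < p - 1 := by omega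
        have hF : F N p hN hl hp2 (Sum.inr (i, Sum.inl j)) =
            Sum.inr (i, Sum.inl ⟨(j:ℕ)+1, hlt⟩) := by
          simp only [F]
          rw [if_neg hi, dif_pos ⟨he, hlt⟩]
        refine ⟨?_, by rw [hF]; trivial, by rw [hF]; exact adj_PP.mpr ⟨rfl, Or.inl rfl⟩⟩
        rw [hF]
        simp only [F]
        rw [if_neg hi,
          dif_neg (show ¬(Even ((j:ℕ)+1) ∧ (j:ℕ)+1+1 < p - 1) by
            rintro ⟨h, -⟩; rw [Nat.even_iff] at h; omega)]
        simp only [Sum.inr.injEq, Prod.mk.injEq, Sum.inl.injEq, true_and]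
        exact Fin.val_injective (show (j:ℕ) + 1 - 1 = (j:ℕ) by omega)
      · have hj2 : (j:ℕ) % 2 = 1 := Nat.odd_iff.mp (Nat.not_even_iff_odd.mp he)
        have hlt : (j : ℕ) - 1 < p - 1 := by omega
        have hF : F N p hN hl hp2 (Sum.inr (i, Sum.inl j)) =
            Sum.inr (i, Sum.inl ⟨(j:ℕ)-1, hlt⟩) := by
          simp only [F]
          rw [if_neg hi, dif_neg (by rintro ⟨h, -⟩; exact he h)]
        refine ⟨?_, by rw [hF]; trivial,
          by rw [hF]; exact adj_PP.mpr ⟨rfl, Or.inr (show (j:ℕ) - 1 + 1 = (j:ℕ) by omega)⟩⟩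
        rw [hF]
        simp only [F]
        rw [if_neg hi,
          dif_pos (show Even ((j:ℕ)-1) ∧ (j:ℕ)-1+1 < p - 1 from
            ⟨by rw [Nat.even_iff]; omega, by omega⟩)]
        simp only [Sum.inr.injEq, Prod.mk.injEq, Sum.inl.injEq, true_and]
        exact Fin.val_injective (show (j:ℕ) - 1 + 1 = (j:ℕ) by omega)
  · -- leaf
    obtain ⟨hi, hk⟩ : (i : ℕ) = 0 ∧ (k : ℕ) = 0 := hv
    have hF : F N p hN hl hp2 (Sum.inr (i, Sum.inr k)) =
        Sum.inr (i, Sum.inl ⟨p-2, by omega⟩) := by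
      simp only [F]
      rw [if_pos ⟨hi, hk⟩]
    refine ⟨?_, by rw [hF]; trivial,
      by rw [hF]; exact (adj_PL.mpr ⟨rfl, show p - 2 + 2 = p by omega⟩).symm⟩
    rw [hF]
    simp only [F]
    rw [if_pos hi, if_neg (show ¬(p - 2 = 0) by omega)]
    simp only [if_true]
    simp only [Sum.inr.injEq, Prod.mk.injEq, Sum.inr.injEq, true_and]
    exact Fin.val_injective (show (0:ℕ) = ↑k by omega)

def consM (hN : 0 < N) (hl : 0 < N - 1) (hp2 : 1 < p) (hop : Odd p) :
    (snpGraph N p).Subgraph where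
  verts := mverts N p
  Adj a b := a ∈ mverts N p ∧ b ∈ mverts N p ∧
    b = F N p hN hl hp2 a ∧ a = F N p hN hl hp2 b
  adj_sub := by
    rintro a b ⟨ha, hb, rfl, h2⟩
    exact (F_spec hN hl hp2 hop a ha).2.2
  edge_vert := fun h => h.1
  symm := by
    constructor
    rintro a b ⟨ha, hb, h1, h2⟩
    exact ⟨hb, ha, h2, h1⟩

lemma consM_isMatching (hN : 0 < N) (hl : 0 < N - 1) (hp2 : 1 < p) (hop : Odd p) :
    (consM hN hl hp2 hop (N := N) (p := p)).IsMatching := by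
  intro v hv
  obtain ⟨hinv, hmem, -⟩ := F_spec hN hl hp2 hop v hv
  refine ⟨F N p hN hl hp2 v, ⟨hv, hmem, rfl, hinv.symm⟩, ?_⟩
  rintro y ⟨-, -, rfl, -⟩
  rfl


lemma mverts_ncard (hN : 0 < N) (hl : 0 < N - 1) :
    (mverts N p).ncard = N * (p - 1) + 2 := by
  have hinj : Function.Injective
      (fun x : Fin N × Fin (p-1) => (Sum.inr (x.1, Sum.inl x.2) : VV N p)) := by
    rintro ⟨a1, a2⟩ ⟨b1, b2⟩ h
    simpa [Prod.ext_iff] using h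
  have hset : mverts N p = insert (Sum.inl ())
      (insert (Sum.inr (⟨0, hN⟩, Sum.inr ⟨0, hl⟩))
        (Set.range fun x : Fin N × Fin (p-1) => (Sum.inr (x.1, Sum.inl x.2) : VV N p))) := by
    ext v
    obtain ⟨u⟩ | ⟨i, j | k⟩ := v
    · simp [mverts]
    · simp only [mverts, Set.mem_setOf_eq, Set.mem_insert_iff, Set.mem_range]
      exact iff_of_true trivial (Or.inr (Or.inr ⟨(i, j), rfl⟩))
    · simp only [mverts, Set.mem_setOf_eq, Set.mem_insert_iff, Set.mem_range]
      constructor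
      · rintro ⟨hi, hk⟩
        refine Or.inr (Or.inl ?_)
        simp only [Sum.inr.injEq, Prod.mk.injEq]
        constructor
        · apply Fin.val_injective; simpa using hi
        · first
          | (apply Fin.val_injective; simpa using hk)
          | (simp only [Sum.inr.injEq]; apply Fin.val_injective; simpa using hk)
      · rintro (h | h | ⟨x, h⟩)
        · simp at h
        · obtain ⟨h1, h2⟩ : i = ⟨0, hN⟩ ∧ k = ⟨0, hl⟩ := by
            simpa [Prod.ext_iff] using h
          exact ⟨by rw [h1], by rw [h2]⟩
        · simp at h
  rw [hset]
  rw [Set.ncard_insert_of_notMem (by simp), Set.ncard_insert_of_notMem (by simp),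
    ← Set.image_univ, Set.ncard_image_of_injective _ hinj, Set.ncard_univ]
  simp [Nat.card_eq_fintype_card]

/-- the single-edge matching used when `p = 1` -/
def consM1 (hN : 0 < N) (hl : 0 < N - 1) (hp1 : p = 1) : (snpGraph N p).Subgraph where
  verts := {Sum.inl (), Sum.inr (⟨0, hN⟩, Sum.inr ⟨0, hl⟩)}
  Adj a b :=
    (a = Sum.inl () ∧ b = Sum.inr (⟨0, hN⟩, Sum.inr ⟨0, hl⟩)) ∨
    (b = Sum.inl () ∧ a = Sum.inr (⟨0, hN⟩, Sum.inr ⟨0, hl⟩))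
  adj_sub := by
    rintro a b (⟨rfl, rfl⟩ | ⟨rfl, rfl⟩)
    · exact adj_CL.mpr hp1
    · exact (adj_CL.mpr hp1).symm
  edge_vert := by
    rintro a b (⟨rfl, -⟩ | ⟨-, rfl⟩)
    · exact Set.mem_insert _ _
    · exact Set.mem_insert_of_mem _ rfl
  symm := by
    constructor
    rintro a b (⟨h1, h2⟩ | ⟨h1, h2⟩)
    · exact Or.inr ⟨h1, h2⟩
    · exact Or.inl ⟨h1, h2⟩

lemma consM1_isMatching (hN : 0 < N) (hl : 0 < N - 1) (hp1 : p = 1) :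
    (consM1 hN hl hp1 (N := N) (p := p)).IsMatching := by
  intro v hv
  rcases hv with rfl | hv
  · refine ⟨Sum.inr (⟨0, hN⟩, Sum.inr ⟨0, hl⟩), Or.inl ⟨rfl, rfl⟩, ?_⟩
    rintro y (⟨-, rfl⟩ | ⟨rfl, h⟩)
    · rfl
    · simp at h
  · rcases hv with rfl
    refine ⟨Sum.inl (), Or.inr ⟨rfl, rfl⟩, ?_⟩
    rintro y (⟨h, -⟩ | ⟨rfl, -⟩)
    · simp at h
    · rfl

lemma consM1_ncard (hN : 0 < N) (hl : 0 < N - 1) (hp1 : p = 1) :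
    (consM1 hN hl hp1 (N := N) (p := p)).verts.ncard = N * (p - 1) + 2 := by
  have : (consM1 hN hl hp1 (N := N) (p := p)).verts =
      {Sum.inl (), Sum.inr (⟨0, hN⟩, Sum.inr ⟨0, hl⟩)} := rfl
  rw [this, Set.ncard_pair (by simp), hp1]
  omega

lemma upper (hN : 3 ≤ N) (hop : Odd p) (hp2 : 1 < p) (M : (snpGraph N p).Subgraph)
    (hM : M.IsMatching) : M.verts.ncard ≤ N * (p - 1) + 2 := by
  classical
  have hpm : p % 2 = 1 := Nat.odd_iff.mp hop
  have hp3 : 3 ≤ p := by omega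
  -- the partner function
  set g : VV N p → VV N p := fun v => if h : v ∈ M.verts then (hM h).choose else v with hgdef
  have hgadj : ∀ v, (hv : v ∈ M.verts) → M.Adj v (g v) := by
    intro v hv
    simp only [hgdef, dif_pos hv]
    exact (hM hv).choose_spec.1
  have hgu : ∀ {v w}, M.Adj v w → w = g v := by
    intro v w h
    have hv := M.edge_vert h
    simp only [hgdef, dif_pos hv]
    exact (hM hv).choose_spec.2 w h
  have hginv : ∀ v, v ∈ M.verts → g (g v) = v := by
    intro v hv
    exact (hgu (hgadj v hv).symm).symm
  -- every matched leaf is matched to the end of its path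
  have hleaf : ∀ (i : Fin N) (k : Fin (N-1)), Sum.inr (i, Sum.inr k) ∈ M.verts →
      g (Sum.inr (i, Sum.inr k)) = Sum.inr (i, Sum.inl ⟨p-2, by omega⟩) := by
    intro i k hv
    have hG := M.adj_sub (hgadj _ hv)
    rcases hx : g (Sum.inr (i, Sum.inr k)) with ⟨u⟩ | ⟨i', j' | k'⟩ <;> rw [hx] at hG
    · have := adj_CL.mp hG.symm
      omega
    · obtain ⟨hii, hj⟩ := adj_PL.mp hG.symm
      have hjv : j' = (⟨p-2, by omega⟩ : Fin (p-1)) :=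
        Fin.val_injective (show (j' : ℕ) = p - 2 by omega)
      rw [← hii, hjv]
    · exact absurd hG adj_LL
  -- key structural fact: a fully-matched branch with a matched leaf uses the center
  have hkey : ∀ i : Fin N, (∀ j : Fin (p-1), Sum.inr (i, Sum.inl j) ∈ M.verts) →
      (∃ k : Fin (N-1), Sum.inr (i, Sum.inr k) ∈ M.verts) →
      M.Adj (Sum.inl ()) (Sum.inr (i, Sum.inl ⟨0, by omega⟩)) := by
    intro i hall ⟨k, hk⟩
    have hq0 : 0 < p - 1 := by omega
    set pn : ℕ → VV N p := fun j => Sum.inr (i, Sum.inl ⟨j % (p-1), Nat.mod_lt _ hq0⟩)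
      with hpndef
    have pnval : ∀ a, a < p - 1 →
        ((⟨a % (p-1), Nat.mod_lt _ hq0⟩ : Fin (p-1)) : ℕ) = a := by
      intro a ha
      exact Nat.mod_eq_of_lt ha
    have pninj : ∀ a b, a < p-1 → b < p-1 → pn a = pn b → a = b := by
      intro a b ha hb h
      simp only [hpndef, Sum.inr.injEq, Prod.mk.injEq, Sum.inl.injEq, Fin.mk.injEq,
        true_and] at h
      rwa [Nat.mod_eq_of_lt ha, Nat.mod_eq_of_lt hb] at h
    have pnmem : ∀ a, pn a ∈ M.verts := fun a => hall _
    -- neighbour characterization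
    have hnb : ∀ jn, jn < p - 1 → ∀ w, (snpGraph N p).Adj (pn jn) w →
        (jn = 0 ∧ w = Sum.inl ()) ∨
        (∃ j', j' < p - 1 ∧ (j' = jn+1 ∨ j'+1 = jn) ∧ w = pn j') ∨
        (jn = p - 2 ∧ ∃ k' : Fin (N-1), w = Sum.inr (i, Sum.inr k')) := by
      intro jn hjn w hw
      have hm := Nat.mod_eq_of_lt hjn
      rcases w with ⟨u⟩ | ⟨i', j' | k'⟩
      · left
        have h0 := adj_CP.mp hw.symm
        have h0' : jn % (p-1) = 0 := h0
        exact ⟨by omega, rfl⟩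
      · right; left
        obtain ⟨hii, hrel⟩ := adj_PP.mp hw
        have hrel' : jn % (p-1) + 1 = (j' : ℕ) ∨ (j' : ℕ) + 1 = jn % (p-1) := hrel
        refine ⟨(j' : ℕ), j'.isLt, by omega, ?_⟩
        rw [← hii]
        simp only [hpndef, Sum.inr.injEq, Prod.mk.injEq, Sum.inl.injEq, true_and]
        exact Fin.val_injective (Nat.mod_eq_of_lt j'.isLt).symm
      · right; right
        obtain ⟨hii, hj⟩ := adj_PL.mp hw
        have hj' : jn % (p-1) + 2 = p := hj
        exact ⟨by omega, k', by rw [hii]⟩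
    -- the top edge of the branch is matched to the leaf
    have htop : g (pn (p-2)) = Sum.inr (i, Sum.inr k) := by
      have h1 := hleaf i k hk
      have h2 : pn (p-2) = Sum.inr (i, Sum.inl ⟨p-2, by omega⟩) := by
        simp only [hpndef, Sum.inr.injEq, Prod.mk.injEq, Sum.inl.injEq, true_and]
        exact Fin.val_injective (pnval _ (by omega))
      rw [h2, ← h1]
      exact hginv _ hk
    -- descending induction along the branch
    have hmain : ∀ s, 2*s + 2 ≤ p - 1 →
        M.Adj (pn (p-1-2-2*s)) (if p-1-2-2*s = 0 then Sum.inl () else pn (p-1-3-2*s)) := by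
      intro s
      induction s with
      | zero =>
        intro hs
        have hadj := hgadj _ (pnmem (p-1-2))
        rcases hnb (p-1-2) (by omega) _ (M.adj_sub hadj) with ⟨h0, hw⟩ |
          ⟨j', hj', hrel, hw⟩ | ⟨hq1, k', hw⟩
        · rw [if_pos (by omega)]
          exact hw ▸ hadj
        · rcases hrel with h | h
          · exfalso
            have h1 : M.Adj (pn j') (pn (p-1-2)) := (hw ▸ hadj).symm
            have h2 := (hgu h1).symm
            have h3 : pn j' = pn (p-2) := by congr 1; omega
            rw [h3, htop] at h2
            simp [hpndef] at h2
          · rw [if_neg (by omega)]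
            have : pn (p-1-3-2*0) = pn j' := by congr 1; omega
            rw [this]
            exact hw ▸ hadj
        · omega
      | succ s ih =>
        intro hs
        have hIH := ih (by omega)
        rw [if_neg (by omega)] at hIH
        have hadj := hgadj _ (pnmem (p-1-2-2*(s+1)))
        rcases hnb (p-1-2-2*(s+1)) (by omega) _ (M.adj_sub hadj) with ⟨h0, hw⟩ |
          ⟨j', hj', hrel, hw⟩ | ⟨hq1, k', hw⟩
        · rw [if_pos h0]
          exact hw ▸ hadj
        · rcases hrel with h | h
          · exfalso
            have h1 : M.Adj (pn j') (pn (p-1-2-2*(s+1))) := (hw ▸ hadj).symm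
            have h2 := (hgu h1).symm
            have h3 : pn j' = pn (p-1-3-2*s) := by congr 1; omega
            have h4 := (hgu hIH.symm).symm
            rw [h3] at h2
            have h5 := h4.symm.trans h2
            have := pninj _ _ (by omega) (by omega) h5
            omega
          · rw [if_neg (by omega)]
            have : pn (p-1-3-2*(s+1)) = pn j' := by congr 1; omega
            rw [this]
            exact hw ▸ hadj
        · omega
    have hlast := hmain ((p-1-2)/2) (by omega)
    have hz : p-1-2-2*((p-1-2)/2) = 0 := by omega
    rw [hz, if_pos rfl] at hlast
    have : pn 0 = Sum.inr (i, Sum.inl ⟨0, by omega⟩) := by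
      simp only [hpndef, Sum.inr.injEq, Prod.mk.injEq, Sum.inl.injEq, true_and]
      exact Fin.val_injective (Nat.zero_mod _)
    rw [this] at hlast
    exact hlast.symm
  -- now count
  have hfin : M.verts.Finite := Set.toFinite _
  rw [Set.ncard_eq_toFinset_card _ hfin]
  have hsub : hfin.toFinset = Finset.univ.filter (· ∈ M.verts) := by
    ext v
    simp only [Set.Finite.mem_toFinset, Finset.mem_filter, Finset.mem_univ, true_and]
  rw [hsub, Finset.card_filter]
  rw [Fintype.sum_sum_type, Fintype.sum_prod_type]
  simp only [Fintype.sum_sum_type]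
  have hB : ∀ i : Fin N,
      (∑ k : Fin (N-1), if Sum.inr (i, Sum.inr k) ∈ M.verts then 1 else 0) ≤ 1 := by
    intro i
    rw [← Finset.card_filter]
    apply Finset.card_le_one.mpr
    intro a ha b hb
    simp only [Finset.mem_filter] at ha hb
    have f1 : g (Sum.inr (i, Sum.inl ⟨p-2, by omega⟩)) = Sum.inr (i, Sum.inr a) := by
      rw [← hleaf i a ha.2]; exact hginv _ ha.2
    have f2 : g (Sum.inr (i, Sum.inl ⟨p-2, by omega⟩)) = Sum.inr (i, Sum.inr b) := by
      rw [← hleaf i b hb.2]; exact hginv _ hb.2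
    have := f1.symm.trans f2
    simpa using this
  have hA : ∀ i : Fin N,
      (∑ j : Fin (p-1), if Sum.inr (i, Sum.inl j) ∈ M.verts then 1 else 0) ≤ p - 1 := by
    intro i
    calc (∑ j : Fin (p-1), if Sum.inr (i, Sum.inl j) ∈ M.verts then 1 else 0)
        ≤ ∑ _j : Fin (p-1), 1 := Finset.sum_le_sum (fun j _ => by split <;> omega)
      _ = p - 1 := by simp
  have hAB : ∀ i : Fin N,
      ((∑ j : Fin (p-1), if Sum.inr (i, Sum.inl j) ∈ M.verts then 1 else 0) +
       (∑ k : Fin (N-1), if Sum.inr (i, Sum.inr k) ∈ M.verts then 1 else 0)) ≤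
      (p - 1) + (if M.Adj (Sum.inl ()) (Sum.inr (i, Sum.inl ⟨0, by omega⟩)) then 1 else 0) := by
    intro i
    by_cases hfull : (∑ j : Fin (p-1), if Sum.inr (i, Sum.inl j) ∈ M.verts then 1 else 0)
        = p - 1 ∧ 1 ≤ (∑ k : Fin (N-1), if Sum.inr (i, Sum.inr k) ∈ M.verts then 1 else 0)
    · obtain ⟨hApi, hBpi⟩ := hfull
      have hallp : ∀ j : Fin (p-1), Sum.inr (i, Sum.inl j) ∈ M.verts := by
        intro j
        by_contra hj
        rw [← Finset.sum_erase_add _ _ (Finset.mem_univ j), if_neg hj, add_zero] at hApi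
        have : (∑ x ∈ Finset.univ.erase j,
            if Sum.inr (i, Sum.inl x) ∈ M.verts then 1 else 0) ≤ p - 2 := by
          calc _ ≤ ∑ _x ∈ Finset.univ.erase j, 1 :=
                Finset.sum_le_sum (fun x _ => by split <;> omega)
            _ = p - 2 := by
                rw [Finset.sum_const, smul_eq_mul, mul_one,
                  Finset.card_erase_of_mem (Finset.mem_univ j)]
                simp only [Finset.card_univ, Fintype.card_fin]
                omega
        omega
      have hex : ∃ k : Fin (N-1), Sum.inr (i, Sum.inr k) ∈ M.verts := by
        by_contra h
        push_neg at h
        rw [Finset.sum_eq_zero (fun k _ => by rw [if_neg (h k)])] at hBpi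
        omega
      rw [if_pos (hkey i hallp hex)]
      have := hB i
      omega
    · have h1 := hA i
      have h2 := hB i
      have h3 : (∑ j : Fin (p-1), if Sum.inr (i, Sum.inl j) ∈ M.verts then 1 else 0) ≤ p - 2
          ∨ (∑ k : Fin (N-1), if Sum.inr (i, Sum.inr k) ∈ M.verts then 1 else 0) = 0 := by
        rcases not_and_or.mp hfull with h | h
        · left; omega
        · right; omega
      split <;> omega
  have hchi : (∑ i : Fin N,
      if M.Adj (Sum.inl ()) (Sum.inr (i, Sum.inl ⟨0, by omega⟩)) then 1 else 0) ≤ 1 := by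
    rw [← Finset.card_filter]
    apply Finset.card_le_one.mpr
    intro a ha b hb
    simp only [Finset.mem_filter] at ha hb
    have := (hgu ha.2).trans (hgu hb.2).symm
    simpa using this
  have hU : (∑ u : Unit, if Sum.inl u ∈ M.verts then 1 else 0) ≤ 1 := by
    simp only [Finset.univ_unique, Finset.sum_singleton]
    split <;> omega
  refine le_trans (add_le_add hU (Finset.sum_le_sum fun i _ => hAB i)) ?_
  rw [Finset.sum_add_distrib, Finset.sum_const, Finset.card_univ, Fintype.card_fin,
    smul_eq_mul]
  have := hchi
  omega

lemma upper1 (hp1 : p = 1) (M : (snpGraph N p).Subgraph)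
    (hM : M.IsMatching) : M.verts.ncard ≤ 2 := by
  classical
  set g : VV N p → VV N p := fun v => if h : v ∈ M.verts then (hM h).choose else v with hgdef
  have hgadj : ∀ v, (hv : v ∈ M.verts) → M.Adj v (g v) := by
    intro v hv
    simp only [hgdef, dif_pos hv]
    exact (hM hv).choose_spec.1
  have hgu : ∀ {v w}, M.Adj v w → w = g v := by
    intro v w h
    have hv := M.edge_vert h
    simp only [hgdef, dif_pos hv]
    exact (hM hv).choose_spec.2 w h
  have hedge : ∀ a b, M.Adj a b → a = Sum.inl () ∨ b = Sum.inl () := by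
    intro a b h
    have hG := M.adj_sub h
    rcases a with ⟨u⟩ | ⟨i, j | k⟩
    · exact Or.inl rfl
    · exact absurd j.isLt (by omega)
    · rcases b with ⟨u'⟩ | ⟨i', j' | k'⟩
      · exact Or.inr rfl
      · exact absurd j'.isLt (by omega)
      · exact absurd hG adj_LL
  have hsub2 : M.verts ⊆ {Sum.inl (), g (Sum.inl ())} := by
    intro v hv
    have hadj := hgadj v hv
    rcases hedge _ _ hadj with h | h
    · exact Or.inl h
    · right
      rw [h] at hadj
      exact hgu hadj.symm
  calc M.verts.ncard ≤ ({Sum.inl (), g (Sum.inl ())} : Set (VV N p)).ncard :=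
        Set.ncard_le_ncard hsub2 (Set.toFinite _)
    _ ≤ ({g (Sum.inl ())} : Set (VV N p)).ncard + 1 := Set.ncard_insert_le _ _
    _ = 2 := by rw [Set.ncard_singleton]

lemma main (N p : ℕ) (hN : 3 ≤ N) (hop : Odd p) :
    deficiency (snpGraph N p) = N * (N - 1) - 1 := by
  classical
  have hN0 : 0 < N := by omega
  have hl : 0 < N - 1 := by omega
  have hcard : Nat.card (VV N p) = 1 + (N * (p-1) + N * (N-1)) := by
    simp only [Nat.card_eq_fintype_card, Fintype.card_sum, Fintype.card_prod,
      Fintype.card_fin, Fintype.card_unit]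
    rw [Nat.mul_add]
  have hbound : ∀ k ∈ {n | ∃ M : (snpGraph N p).Subgraph, M.IsMatching ∧ M.verts.ncard = n},
      k ≤ N * (p - 1) + 2 := by
    rintro k ⟨M, hM, rfl⟩
    by_cases hp1 : p = 1
    · exact le_trans (upper1 hp1 M hM) (by omega)
    · have hp2 : 1 < p := by
        rcases hop with ⟨t, ht⟩
        omega
      exact upper hN hop hp2 M hM
  have hmem : (N * (p - 1) + 2) ∈
      {n | ∃ M : (snpGraph N p).Subgraph, M.IsMatching ∧ M.verts.ncard = n} := by
    by_cases hp1 : p = 1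
    · exact ⟨consM1 hN0 hl hp1, consM1_isMatching hN0 hl hp1, consM1_ncard hN0 hl hp1⟩
    · have hp2 : 1 < p := by
        rcases hop with ⟨t, ht⟩
        omega
      exact ⟨consM hN0 hl hp2 hop, consM_isMatching hN0 hl hp2 hop, mverts_ncard hN0 hl⟩
  have hsup : sSup {n | ∃ M : (snpGraph N p).Subgraph, M.IsMatching ∧ M.verts.ncard = n}
      = N * (p - 1) + 2 :=
    le_antisymm (csSup_le ⟨_, hmem⟩ hbound) (le_csSup ⟨_, hbound⟩ hmem)
  rw [deficiency, hsup, hcard]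
  have hb : 1 ≤ N * (N - 1) := Nat.mul_pos hN0 hl
  omega

end SnpAux

theorem stmt_15 (n p : ℕ) (hn : 4 ≤ n) (hp : Odd p) :
    deficiency (snpGraph (n - 1) p) = n ^ 2 - 3 * n + 1 := by
  have hN : 3 ≤ n - 1 := by omega
  have hmain := SnpAux.main (n - 1) p hN hp
  rw [hmain]
  obtain ⟨a, rfl⟩ : ∃ a, n = a + 4 := ⟨n - 4, by omega⟩
  have h2 : (a + 4) ^ 2 = a * a + 8 * a + 16 := by ring
  have h3 : (a + 4 - 1) * (a + 4 - 1 - 1) = a * a + 5 * a + 6 := by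
    have e1 : a + 4 - 1 = a + 3 := by omega
    rw [e1]
    have e2 : a + 3 - 1 = a + 2 := by omega
    rw [e2]
    ring
  omega
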